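/- Let T : M → M be a piecewise C^{ᾱ} expanding map. Then the asymptotic complexity at the beginning satisfies D^b(T) ≤ P*_top(T, 0, ∂O). -/

import Mathlib

open MeasureTheory Filter Set Topology
open scoped ENNReal NNReal Classical

noncomputable section

abbrev Euc (d : ℕ) := EuclideanSpace ℝ (Fin d)

/-- `C^β` smoothness in the Hölder sense on a set, for a real exponent `β > 0`:
`⌊β⌋` continuous derivatives, the top one being `(β - ⌊β⌋)`-Hölder. -/
def CHolderOn {d : ℕ} {F : Type*} [NormedAddCommGroup F] [NormedSpace ℝ F]
    (β : ℝ) (f : Euc d → F) (s : Set (Euc d)) : Prop :=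
  ContDiffOn ℝ (⌊β⌋₊ : ℕ) f s ∧
    ∃ C : ℝ≥0, HolderOnWith C (β - ⌊β⌋₊).toNNReal (iteratedFDerivWithin ℝ ⌊β⌋₊ f s) s

/-- A piecewise `C^abar` expanding map `T` on `M ⊆ ℝ^d`. -/
structure PiecewiseExpanding (d : ℕ) (M : Set (Euc d)) (T : Euc d → Euc d) (abar : ℝ) :
    Type 1 where
  I : Type
  fintype_I : Fintype I
  O : I → Set (Euc d)
  isOpen_O : ∀ i, IsOpen (O i)
  O_subset : ∀ i, O i ⊆ M
  disj : Pairwise (Function.onFun Disjoint O)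
  ae_cover : volume (M \ ⋃ i, O i) = 0
  bd_pieces : ∀ i, ∃ (N : ℕ) (φ : Fin N → EuclideanSpace ℝ (Fin (d - 1)) → Euc d)
      (K : Fin N → Set (EuclideanSpace ℝ (Fin (d - 1)))),
      (∀ j, IsCompact (K j) ∧ ContDiffOn ℝ 1 (φ j) (K j)) ∧
      frontier (O i) = ⋃ j, φ j '' K j
  Otil : I → Set (Euc d)
  isOpen_Otil : ∀ i, IsOpen (Otil i)
  closure_subset : ∀ i, closure (O i) ⊆ Otil i
  Ttil : I → Euc d → Euc d
  Ttil_smooth : ∀ i, CHolderOn abar (Ttil i) (Otil i)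
  Ttil_inj : ∀ i, InjOn (Ttil i) (Otil i)
  Ttil_inv_smooth : ∀ i, CHolderOn abar (Function.invFunOn (Ttil i) (Otil i)) (Ttil i '' Otil i)
  T_eq : ∀ i, EqOn T (Ttil i) (O i)
  lam : ℝ
  one_lt_lam : 1 < lam
  expansion : ∀ i, ∀ x ∈ Otil i, ∀ v, lam * ‖v‖ ≤ ‖fderiv ℝ (Ttil i) x v‖
  mapsTo : MapsTo T M M
  measurable_T : Measurable T

attribute [instance] PiecewiseExpanding.fintype_I

namespace PiecewiseExpanding

variable {d : ℕ} {M : Set (Euc d)} {T : Euc d → Euc d} {abar : ℝ}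
variable (P : PiecewiseExpanding d M T abar)

/-- The `n`-cylinder `O_𝐢 = ⋂_{k<n} T^{-k} O_{i_k}`. -/
def cyl (n : ℕ) (w : Fin n → P.I) : Set (Euc d) :=
  ⋂ k : Fin n, T^[(k : ℕ)] ⁻¹' P.O (w k)

/-- The boundary `∂𝒪 = ⋃ i, ∂ O_i`. -/
def bdO : Set (Euc d) := ⋃ i, frontier (P.O i)

/-- The singular set `𝒮_𝒪 = ⋃_{k ≥ 0} T^{-k} ∂𝒪`. -/
def sing : Set (Euc d) := ⋃ k : ℕ, T^[k] ⁻¹' P.bdO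

/-- Topological pressure `P^*_top(T, {log f_n}, E)` of a (sub)multiplicative sequence `f`
on the set `E`, defined through sums over `n`-cylinders meeting `E`. -/
def pressure (f : ℕ → Euc d → ℝ) (E : Set (Euc d)) : ℝ :=
  atTop.limsup fun n : ℕ => (n : ℝ)⁻¹ *
    Real.log (∑ w ∈ Finset.univ.filter
        (fun w : Fin n → P.I => (E ∩ closure (P.cyl n w)).Nonempty),
      sSup (f n '' P.cyl n w))

/-- The `n`-complexity at the beginning `D^b_n(T)`. -/
def DbN (n : ℕ) : ℕ :=
  sSup ((fun x => (Finset.univ.filter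
    (fun w : Fin n → P.I => x ∈ closure (P.cyl n w))).card) '' M)

/-- The asymptotic complexity at the beginning `D^b(T)`. -/
def Db : ℝ := atTop.limsup fun n : ℕ => (n : ℝ)⁻¹ * Real.log (P.DbN n)

/-- The weighted `n`-complexity at the beginning `D^b_n(T, {log f_n})`. -/
def DbNW (f : ℕ → Euc d → ℝ) (n : ℕ) : ℝ :=
  sSup ((fun x => ∑ w ∈ Finset.univ.filter
      (fun w : Fin n → P.I => x ∈ closure (P.cyl n w)),
    sSup (f n '' closure (P.cyl n w))) '' M)

/-- The weighted asymptotic complexity at the beginning `D^b(T, {log f_n})`. -/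
def DbW (f : ℕ → Euc d → ℝ) : ℝ :=
  atTop.limsup fun n : ℕ => (n : ℝ)⁻¹ * Real.log (P.DbNW f n)

/-- The `n`-complexity at the end `D^e_n(T)`. -/
def DeN (n : ℕ) : ℕ :=
  sSup ((fun x => (Finset.univ.filter
    (fun w : Fin n → P.I => x ∈ closure (T^[n] '' P.cyl n w))).card) '' M)

/-- The asymptotic complexity at the end `D^e(T)`. -/
def De : ℝ := atTop.limsup fun n : ℕ => (n : ℝ)⁻¹ * Real.log (P.DeN n)

/-- A function is piecewise `C^α` if its restriction to each piece `O_i` is `C^α`. -/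
def PiecewiseCHolder (α : ℝ) {F : Type*} [NormedAddCommGroup F] [NormedSpace ℝ F]
    (g : Euc d → F) : Prop :=
  ∀ i, CHolderOn α g (P.O i)

/-- A function is piecewise continuous if its restriction to each piece `O_i` extends
continuously to the neighbourhood `Õ_i`. -/
def PiecewiseContinuousF {F : Type*} [TopologicalSpace F] (g : Euc d → F) : Prop :=
  ∀ i, ∃ h : Euc d → F, ContinuousOn h (P.Otil i) ∧ EqOn g h (P.O i)

end PiecewiseExpanding

/-- `ν_n(x) = 1 / inf_{‖v‖=1} ‖D_x T^n v‖`. -/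
def nuIter {d : ℕ} (T : Euc d → Euc d) (n : ℕ) (x : Euc d) : ℝ :=
  (sInf ((fun v => ‖fderiv ℝ (T^[n]) x v‖) '' Metric.sphere (0 : Euc d) 1))⁻¹

/-- `|det D_x T^n|`. -/
def absDetIter {d : ℕ} (T : Euc d → Euc d) (n : ℕ) (x : Euc d) : ℝ :=
  |(fderiv ℝ (T^[n]) x).det|

/-- Birkhoff product `g^{(n)} = ∏_{k<n} g ∘ T^k`. -/
def birkhoff {d : ℕ} {F : Type*} [CommMonoid F] (T : Euc d → Euc d) (g : Euc d → F)
    (n : ℕ) (x : Euc d) : F :=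
  ∏ k ∈ Finset.range n, g (T^[k] x)

/-- A submultiplicative sequence of bounded nonnegative functions for `T` on `M`. -/
def Submult {d : ℕ} (T : Euc d → Euc d) (M : Set (Euc d)) (f : ℕ → Euc d → ℝ) : Prop :=
  (∀ n, ∀ x ∈ M, 0 ≤ f n x) ∧ (∀ n, ∃ C, ∀ x ∈ M, f n x ≤ C) ∧
    ∀ m n, 1 ≤ m → 1 ≤ n → ∀ x ∈ M, f (m + n) x ≤ f m (T^[n] x) * f n x

/-- Ergodic `T`-invariant Borel probability measures carried by `M`. -/
def ErgOn {d : ℕ} (T : Euc d → Euc d) (M : Set (Euc d)) (μ : Measure (Euc d)) : Prop :=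
  IsProbabilityMeasure μ ∧ μ Mᶜ = 0 ∧ Ergodic T μ

/-- Kolmogorov–Sinai entropy `h_μ(T)`, as the supremum over finite measurable partitions of the
exponential growth rate of the entropies of their dynamical refinements. -/
def ksEntropy {d : ℕ} (T : Euc d → Euc d) (μ : Measure (Euc d)) : ℝ :=
  ⨆ (m : ℕ) (ξ : Fin m → Set (Euc d)) (_ : (∀ j, MeasurableSet (ξ j)) ∧
      Pairwise (Function.onFun Disjoint ξ) ∧ μ (univ \ ⋃ j, ξ j) = 0),
    atTop.limsup fun n : ℕ => (n : ℝ)⁻¹ *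
      ∑ c : Fin n → Fin m,
        Real.negMulLog (μ (⋂ k : Fin n, T^[(k : ℕ)] ⁻¹' ξ (c k))).toReal

/-- The smallest Lyapunov exponent `χ_μ(DT)` of the derivative cocycle. -/
def smallestLyap {d : ℕ} (T : Euc d → Euc d) (μ : Measure (Euc d)) : ℝ :=
  atTop.limsup fun n : ℕ => -((n : ℝ)⁻¹ * ∫ x, Real.log (nuIter T n x) ∂μ)

/-- The transfer operator, as a map on functions: `L_g φ(x) = ∑_{y ∈ M, T y = x} g(y) φ(y)`. -/
def transferFun {d : ℕ} (T : Euc d → Euc d) (M : Set (Euc d)) (g φ : Euc d → ℂ)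
    (x : Euc d) : ℂ :=
  ∑' y : ↥(M ∩ T ⁻¹' {x}), g y * φ y

/-- The essential spectral radius of a bounded operator: the radius of the smallest disc
outside of which the spectrum consists of isolated eigenvalues of finite multiplicity. -/
def essentialSpectralRadius {X : Type*} [NormedAddCommGroup X] [NormedSpace ℂ X]
    (A : X →L[ℂ] X) : ℝ≥0∞ :=
  sInf {r : ℝ≥0∞ | ∀ z ∈ spectrum ℂ A, r < (‖z‖₊ : ℝ≥0∞) →
    𝓝[spectrum ℂ A \ {z}] z = ⊥ ∧
    Module.End.HasEigenvalue (A.toLinearMap) z ∧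
    FiniteDimensional ℂ ↥(Module.End.maxGenEigenspace (A.toLinearMap) z)}

/-- The Bessel-potential Sobolev norm `‖F⁻¹((1+|ξ|²)^{t/2} F u)‖_{L_p}` on `ℝ^d`. -/
def besselNorm (d : ℕ) (t p : ℝ) (u : Euc d → ℂ) : ℝ≥0∞ :=
  eLpNorm (FourierTransformInv.fourierInv
      fun ξ : Euc d => ((1 + ‖ξ‖ ^ 2) ^ (t / 2) : ℝ) • FourierTransform.fourier u ξ)
    (ENNReal.ofReal p) volume

/-- The Sobolev norm of `H^t_p(M)`, for `M ⊆ ℝ^d` (identity chart). -/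
def sobolevNormM {d : ℕ} (M : Set (Euc d)) (t p : ℝ) (φ : Euc d → ℂ) : ℝ≥0∞ :=
  besselNorm d t p (M.indicator φ)

/-- Membership in the Sobolev space `H^t_p(M) ⊆ L_p(M)`. -/
def InSobolev {d : ℕ} (M : Set (Euc d)) (t p : ℝ) (φ : Euc d → ℂ) : Prop :=
  MemLp φ (ENNReal.ofReal p) (volume.restrict M) ∧ sobolevNormM M t p φ < ⊤

/-- `X` is a realization of the Sobolev space `H^t_p(M)` as a Banach space: a complete normed
space whose elements are (classes of) functions of finite Sobolev norm, the norm of `X`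
being equivalent to the Sobolev norm. -/
structure SobolevRealization (d : ℕ) (M : Set (Euc d)) (t p : ℝ) (X : Type*)
    [NormedAddCommGroup X] [NormedSpace ℂ X] (ev : X → Euc d → ℂ) : Prop where
  complete : CompleteSpace X
  map_add : ∀ x y, ev (x + y) = ev x + ev y
  map_smul : ∀ (c : ℂ) x, ev (c • x) = c • ev x
  inj : ∀ x, ev x =ᵐ[volume.restrict M] (0 : Euc d → ℂ) → x = 0
  mem : ∀ x, InSobolev M t p (ev x)
  surj : ∀ φ : Euc d → ℂ, InSobolev M t p φ → ∃ x, ev x =ᵐ[volume.restrict M] φ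
  norm_equiv : ∃ C : ℝ, 0 < C ∧ ∀ x,
    sobolevNormM M t p (ev x) ≤ ENNReal.ofReal C * ENNReal.ofReal ‖x‖ ∧
    ENNReal.ofReal ‖x‖ ≤ ENNReal.ofReal C * sobolevNormM M t p (ev x)


/-- The weight sequence `f_{n,t,p}(x) = |g^{(n)}(x)| · |det D_x T^n|^{1/p} · ν_n(x)^t`. -/
def weightSeq {d : ℕ} (T : Euc d → Euc d) (g : Euc d → ℂ) (p t : ℝ) (n : ℕ) (x : Euc d) : ℝ :=
  ‖birkhoff T g n x‖ * absDetIter T n x ^ (1 / p) * nuIter T n x ^ t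


namespace PiecewiseExpanding

variable {d : ℕ} {M : Set (Euc d)} {T : Euc d → Euc d} {abar : ℝ}
variable (P : PiecewiseExpanding d M T abar)

/-- The number of `n`-cylinders whose closure meets the boundary. -/
def cnt (n : ℕ) : ℕ :=
  (Finset.univ.filter
    (fun w : Fin n → P.I => (P.bdO ∩ closure (P.cyl n w)).Nonempty)).card

/-- The multiplicity of a point: the number of `n`-cylinders whose closure contains it. -/
def mult (n : ℕ) (x : Euc d) : ℕ :=
  (Finset.univ.filter (fun w : Fin n → P.I => x ∈ closure (P.cyl n w))).card

lemma cyl_zero_subset {n : ℕ} (w : Fin (n + 1) → P.I) :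
    P.cyl (n + 1) w ⊆ P.O (w 0) := by
  intro z hz
  have h := Set.mem_iInter.1 hz 0
  simpa using h

lemma mem_bdO_of_closure {i : P.I} {x : Euc d} (hx : x ∈ closure (P.O i))
    (hx' : x ∉ P.O i) : x ∈ P.bdO :=
  Set.mem_iUnion.2 ⟨i, by rw [(P.isOpen_O i).frontier_eq]; exact ⟨hx, hx'⟩⟩

/-- Key combinatorial lemma: a point of multiplicity at least 2 forces at least that many
cylinders (at some earlier level) to meet the boundary. -/
lemma key (n : ℕ) : ∀ x : Euc d, 2 ≤ P.mult n x →
    ∃ m, 1 ≤ m ∧ m ≤ n ∧ P.mult n x ≤ P.cnt m := by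
  induction n with
  | zero =>
      intro x hx
      exfalso
      have hsub : Subsingleton (Fin 0 → P.I) := ⟨fun a b => funext fun k => k.elim0⟩
      have h1 : P.mult 0 x ≤ Fintype.card (Fin 0 → P.I) :=
        (Finset.card_filter_le _ _).trans_eq Finset.card_univ
      have h2 : Fintype.card (Fin 0 → P.I) ≤ 1 := Fintype.card_le_one_iff_subsingleton.2 hsub
      omega
  | succ n ih =>
      intro x hx2
      set W : Finset (Fin (n + 1) → P.I) :=
        Finset.univ.filter (fun w : Fin (n + 1) → P.I => x ∈ closure (P.cyl (n + 1) w)) with hW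
      by_cases hbd : x ∈ P.bdO
      · refine ⟨n + 1, Nat.succ_le_succ (Nat.zero_le n), le_refl _, ?_⟩
        apply Finset.card_le_card
        intro w hw
        simp only [hW, Finset.mem_filter, Finset.mem_univ, true_and] at hw ⊢
        exact ⟨x, hbd, hw⟩
      · have hO : ∀ w ∈ W, x ∈ P.O (w 0) := by
          intro w hw
          simp only [hW, Finset.mem_filter, Finset.mem_univ, true_and] at hw
          have hcl : x ∈ closure (P.O (w 0)) := closure_mono (P.cyl_zero_subset w) hw
          by_contra h
          exact hbd (P.mem_bdO_of_closure hcl h)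
        have hWm : P.mult (n + 1) x = W.card := rfl
        have hWne : W.Nonempty := Finset.card_pos.1 (by omega)
        obtain ⟨w₁, hw₁⟩ := hWne
        set i₀ := w₁ 0 with hi₀
        have hx0 : x ∈ P.O i₀ := hO w₁ hw₁
        have heads : ∀ w ∈ W, w 0 = i₀ := by
          intro w hw
          by_contra hne
          exact (Set.disjoint_left.1 (P.disj hne)) (hO w hw) hx0
        have hpush : ∀ w ∈ W, T x ∈ closure (P.cyl n (fun k => w k.succ)) := by
          intro w hw
          have h0 : w 0 = i₀ := heads w hw
          have hwcl : x ∈ closure (P.cyl (n + 1) w) := by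
            simpa only [hW, Finset.mem_filter, Finset.mem_univ, true_and] using hw
          have hsub : P.cyl (n + 1) w ⊆ P.O i₀ := by
            rw [← h0]; exact P.cyl_zero_subset w
          have hxOtil : x ∈ P.Otil i₀ := P.closure_subset i₀ (subset_closure hx0)
          have hcont : ContinuousAt (P.Ttil i₀) x :=
            (P.Ttil_smooth i₀).1.continuousOn.continuousAt
              ((P.isOpen_Otil i₀).mem_nhds hxOtil)
          have h1 : P.Ttil i₀ x ∈ closure (P.Ttil i₀ '' P.cyl (n + 1) w) :=
            hcont.continuousWithinAt.mem_closure_image hwcl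
          have himg : P.Ttil i₀ '' P.cyl (n + 1) w = T '' P.cyl (n + 1) w :=
            (((P.T_eq i₀).mono hsub).symm).image_eq
          have hTeq : P.Ttil i₀ x = T x := ((P.T_eq i₀) hx0).symm
          have hmap : T '' P.cyl (n + 1) w ⊆ P.cyl n (fun k => w k.succ) := by
            rintro _ ⟨z, hz, rfl⟩
            refine Set.mem_iInter.2 fun k => ?_
            have hk := Set.mem_iInter.1 hz k.succ
            simp only [Set.mem_preimage] at hk ⊢
            rw [← Function.iterate_succ_apply]
            simpa [Fin.val_succ] using hk
          rw [hTeq, himg] at h1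
          exact closure_mono hmap h1
        have hinj : Set.InjOn (fun w : Fin (n + 1) → P.I => (fun k : Fin n => w k.succ))
            ↑W := by
          intro w hw w' hw' hEq
          funext k
          refine Fin.cases ?_ (fun j => ?_) k
          · rw [heads w hw, heads w' hw']
          · exact congrFun hEq j
        set W' : Finset (Fin n → P.I) :=
          W.image (fun w : Fin (n + 1) → P.I => (fun k : Fin n => w k.succ)) with hW'
        have hcard : W'.card = W.card := Finset.card_image_of_injOn hinj
        have hsub' : W' ⊆ Finset.univ.filter
            (fun v : Fin n → P.I => T x ∈ closure (P.cyl n v)) := by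
          intro v hv
          simp only [hW', Finset.mem_image] at hv
          obtain ⟨w, hw, rfl⟩ := hv
          simp only [Finset.mem_filter, Finset.mem_univ, true_and]
          exact hpush w hw
        have hmle : P.mult (n + 1) x ≤ P.mult n (T x) := by
          have h3 := Finset.card_le_card hsub'
          have e2 : P.mult n (T x) = (Finset.univ.filter
              (fun v : Fin n → P.I => T x ∈ closure (P.cyl n v))).card := rfl
          omega
        have h2' : 2 ≤ P.mult n (T x) := le_trans hx2 hmle
        obtain ⟨m, hm1, hmn, hle⟩ := ih (T x) h2'
        exact ⟨m, hm1, hmn.trans (Nat.le_succ n), hmle.trans hle⟩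

lemma mult_le (n : ℕ) (x : Euc d) : P.mult n x ≤ Fintype.card (Fin n → P.I) :=
  (Finset.card_filter_le _ _).trans_eq Finset.card_univ

lemma DbN_attained (hMne : M.Nonempty) (n : ℕ) : ∃ x ∈ M, P.DbN n = P.mult n x := by
  have hbdd : BddAbove ((fun x => P.mult n x) '' M) := by
    refine ⟨Fintype.card (Fin n → P.I), ?_⟩
    rintro _ ⟨x, _, rfl⟩
    exact P.mult_le n x
  have hmem := Nat.sSup_mem (hMne.image (fun x => P.mult n x)) hbdd
  obtain ⟨x, hx, hx'⟩ := hmem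
  exact ⟨x, hx, hx'.symm⟩

lemma cnt_le_pow (m : ℕ) : P.cnt m ≤ (Fintype.card P.I + 1) ^ m := by
  have h1 : P.cnt m ≤ Fintype.card (Fin m → P.I) :=
    (Finset.card_filter_le _ _).trans_eq Finset.card_univ
  have h2 : Fintype.card (Fin m → P.I) = Fintype.card P.I ^ m := by
    rw [Fintype.card_fun, Fintype.card_fin]
  exact h1.trans (h2 ▸ Nat.pow_le_pow_left (Nat.le_succ _) m)

lemma pressure_one_eq : P.pressure (fun _ _ => 1) P.bdO =
    atTop.limsup (fun n : ℕ => (n : ℝ)⁻¹ * Real.log (P.cnt n)) := by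
  unfold pressure
  congr 1
  funext n
  congr 1
  have hsum : (∑ w ∈ Finset.univ.filter
      (fun w : Fin n → P.I => (P.bdO ∩ closure (P.cyl n w)).Nonempty),
      sSup ((fun _ : Euc d => (1 : ℝ)) '' P.cyl n w)) = (P.cnt n : ℝ) := by
    rw [Finset.sum_congr rfl (fun w hw => ?_), Finset.sum_const, nsmul_eq_mul, mul_one]
    · rfl
    · simp only [Finset.mem_filter, Finset.mem_univ, true_and] at hw
      have hne : (P.cyl n w).Nonempty := by
        obtain ⟨y, _, hy⟩ := hw
        exact closure_nonempty_iff.1 ⟨y, hy⟩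
      rw [hne.image_const, csSup_singleton]
  exact congrArg Real.log hsum

lemma Db_le_limsup_cnt (hMne : M.Nonempty) :
    P.Db ≤ atTop.limsup (fun n : ℕ => (n : ℝ)⁻¹ * Real.log (P.cnt n)) := by
  classical
  set K : ℕ := Fintype.card P.I + 1 with hK
  have hK1 : (1 : ℝ) ≤ (K : ℝ) := by exact_mod_cast Nat.succ_le_succ (Nat.zero_le _)
  have hlogK : 0 ≤ Real.log K := Real.log_nonneg hK1
  set v : ℕ → ℝ := fun n => (n : ℝ)⁻¹ * Real.log (P.cnt n) with hv
  set u : ℕ → ℝ := fun n => (n : ℝ)⁻¹ * Real.log (P.DbN n) with hu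
  have hlogcnt : ∀ m : ℕ, Real.log (P.cnt m) ≤ (m : ℝ) * Real.log K := by
    intro m
    rcases Nat.eq_zero_or_pos (P.cnt m) with h | h
    · rw [h]
      simpa using mul_nonneg (Nat.cast_nonneg m) hlogK
    · calc Real.log (P.cnt m) ≤ Real.log ((K : ℝ) ^ m) := by
            apply Real.log_le_log (by exact_mod_cast h)
            exact_mod_cast P.cnt_le_pow m
        _ = (m : ℝ) * Real.log K := by rw [Real.log_pow]
  have hv0 : ∀ n, 0 ≤ v n := fun n =>
    mul_nonneg (inv_nonneg.2 (Nat.cast_nonneg n)) (Real.log_natCast_nonneg _)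
  have hvb : ∀ n, v n ≤ Real.log K := by
    intro n
    rcases Nat.eq_zero_or_pos n with h | h
    · simp [hv, h, hlogK]
    · have hn0 : (0 : ℝ) < n := by exact_mod_cast h
      have := hlogcnt n
      calc v n ≤ (n : ℝ)⁻¹ * ((n : ℝ) * Real.log K) :=
            mul_le_mul_of_nonneg_left this (inv_nonneg.2 hn0.le)
        _ = Real.log K := by field_simp
  have hbound : atTop.IsBoundedUnder (· ≤ ·) v :=
    Filter.isBoundedUnder_of ⟨Real.log K, hvb⟩
  set L : ℝ := atTop.limsup v with hL
  have hL0 : 0 ≤ L :=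
    le_limsup_of_frequently_le (Filter.Eventually.of_forall hv0).frequently hbound
  have hu0 : ∀ n, 0 ≤ u n := fun n =>
    mul_nonneg (inv_nonneg.2 (Nat.cast_nonneg n)) (Real.log_natCast_nonneg _)
  have hkey : ∀ ε : ℝ, 0 < ε → P.Db ≤ L + ε := by
    intro ε hε
    have hev : ∀ᶠ n in atTop, v n < L + ε / 2 :=
      Filter.eventually_lt_of_limsup_lt (by linarith) hbound
    obtain ⟨N, hN⟩ := Filter.eventually_atTop.1 hev
    have hDbN : ∀ n : ℕ, Real.log (P.DbN n) ≤
        max ((N : ℝ) * Real.log K) ((n : ℝ) * (L + ε / 2)) := by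
      intro n
      obtain ⟨x, hxM, hDx⟩ := P.DbN_attained hMne n
      by_cases h2 : 2 ≤ P.mult n x
      · obtain ⟨m, hm1, hmn, hle⟩ := P.key n x h2
        have hDle : Real.log (P.DbN n) ≤ Real.log (P.cnt m) := by
          rw [hDx]
          apply Real.log_le_log (by exact_mod_cast (by omega : 0 < P.mult n x))
          exact_mod_cast hle
        rcases le_or_gt N m with hNm | hNm
        · have hm0 : (0 : ℝ) < m := by exact_mod_cast hm1
          have hvm := hN m hNm
          have hlog : Real.log (P.cnt m) ≤ (m : ℝ) * (L + ε / 2) := by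
            have h1 : Real.log (P.cnt m) = (m : ℝ) * v m := by
              rw [hv]; field_simp
            rw [h1]
            exact mul_le_mul_of_nonneg_left hvm.le hm0.le
          refine le_trans hDle (le_trans hlog (le_max_of_le_right ?_))
          exact mul_le_mul_of_nonneg_right (by exact_mod_cast hmn) (by linarith)
        · refine le_trans hDle (le_max_of_le_left ?_)
          exact le_trans (hlogcnt m)
            (mul_le_mul_of_nonneg_right (by exact_mod_cast hNm.le) hlogK)
      · have hD1 : P.DbN n ≤ 1 := by rw [hDx]; omega
        have hD1' : (P.DbN n : ℝ) ≤ 1 := by exact_mod_cast hD1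
        have : Real.log (P.DbN n) ≤ 0 :=
          Real.log_nonpos (Nat.cast_nonneg _) hD1'
        exact le_trans this (le_max_of_le_left (mul_nonneg (Nat.cast_nonneg _) hlogK))
    have htend : Filter.Tendsto (fun n : ℕ => (n : ℝ)⁻¹ * ((N : ℝ) * Real.log K))
        atTop (nhds 0) := by
      simpa using tendsto_inv_atTop_nhds_zero_nat.mul_const ((N : ℝ) * Real.log K)
    have hev2 : ∀ᶠ n : ℕ in atTop, (n : ℝ)⁻¹ * ((N : ℝ) * Real.log K) < ε :=
      htend.eventually_lt_const hε
    have hev3 : ∀ᶠ n : ℕ in atTop, u n ≤ L + ε := by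
      filter_upwards [hev2, Filter.eventually_ge_atTop 1] with n hn h1
      have hn0 : (0 : ℝ) < n := by exact_mod_cast h1
      calc u n ≤ (n : ℝ)⁻¹ * max ((N : ℝ) * Real.log K) ((n : ℝ) * (L + ε / 2)) :=
            mul_le_mul_of_nonneg_left (hDbN n) (inv_nonneg.2 hn0.le)
        _ = max ((n : ℝ)⁻¹ * ((N : ℝ) * Real.log K))
              ((n : ℝ)⁻¹ * ((n : ℝ) * (L + ε / 2))) :=
            mul_max_of_nonneg _ _ (inv_nonneg.2 hn0.le)
        _ ≤ L + ε := by
            apply max_le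
            · linarith
            · have heq : (n : ℝ)⁻¹ * ((n : ℝ) * (L + ε / 2)) = L + ε / 2 := by
                field_simp
              rw [heq]; linarith
    exact Filter.limsup_le_of_le (Filter.isCoboundedUnder_le_of_le atTop hu0) hev3
  by_contra hcon
  push_neg at hcon
  have := hkey ((P.Db - L) / 2) (by linarith)
  linarith

end PiecewiseExpanding

/-- Remark 2.5, eq. (2.12) of Baladi–Castorrini: the asymptotic complexity
at the beginning is bounded by the boundary entropy, `D^b(T) ≤ P*_top(T, 0, ∂𝒪)`. -/
theorem complexity_at_beginning_le_boundary_entropy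
    {d : ℕ} (hd : 1 ≤ d) {M : Set (Euc d)} (hM : IsCompact M) (hMconn : IsConnected M)
    {T : Euc d → Euc d} {abar : ℝ} (habar : 1 < abar)
    (P : PiecewiseExpanding d M T abar) :
    P.Db ≤ P.pressure (fun _ _ => 1) P.bdO := by
  rw [P.pressure_one_eq]
  exact P.Db_le_limsup_cnt hMconn.nonempty

end
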